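/- Gradient comparison for the uniaxial projection: let U⋆ ⊂ S₀ be a compact smooth submanifold, P : U⋆ → L(S₀) the smooth map assigning to u the orthogonal projection onto the normal space (T_u U⋆)^⊥, and c = 2 sup_{u∈U⋆} ‖DP(u)‖. If Q, U : ℝᵏ → S₀ are differentiable with U valued in U⋆ and Q − U = P(U)(Q − U) pointwise, then for every direction index j: |∂_j Q|² ≥ (1 − c·|Q − U|)·|∂_j U|² + |∂_j |Q − U||², wherever |Q−U| is differentiable. -/

import Mathlib

theorem stmt19 {E : Type*} [NormedAddCommGroup E] [InnerProductSpace ℝ E]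
    (Q U : ℝ → E) (P : E → (E →L[ℝ] E)) (c t : ℝ) (hc : 0 ≤ c)
    (hQ : DifferentiableAt ℝ Q t) (hU : DifferentiableAt ℝ U t)
    (hPU : DifferentiableAt ℝ (fun s => P (U s)) t)
    (hDdiff : DifferentiableAt ℝ (fun s => ‖Q s - U s‖) t)
    (hnormal : ∀ s, P (U s) (Q s - U s) = Q s - U s)
    (hsym : ∀ v w : E, (inner ℝ (P (U t) v) w : ℝ) = inner ℝ v (P (U t) w))
    (htang : P (U t) (deriv U t) = 0)
    (hDP : ‖deriv (fun s => P (U s)) t‖ ≤ (c/2) * ‖deriv U t‖) :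
    ‖deriv Q t‖^2 ≥ (1 - c * ‖Q t - U t‖) * ‖deriv U t‖^2
      + (deriv (fun s => ‖Q s - U s‖) t)^2 := by
  set D : ℝ → E := fun s => Q s - U s with hDdef
  have hD : DifferentiableAt ℝ D t := hQ.sub hU
  set D' : E := deriv D t with hD'def
  set U' : E := deriv U t with hU'def
  set P' : E →L[ℝ] E := deriv (fun s => P (U s)) t with hP'def
  -- deriv Q = U' + D'
  have hderivQ : deriv Q t = U' + D' := by
    have : deriv D t = deriv Q t - deriv U t := deriv_sub hQ hU
    rw [hD'def, this, hU'def]; abel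
  -- chain rule for the normal projection identity
  have hchain : D' = P' (D t) + P (U t) D' := by
    have h1 : (fun s => P (U s) (D s)) = D := funext fun s => hnormal s
    have h2 : deriv (fun s => P (U s) (D s)) t = P' (D t) + P (U t) D' :=
      deriv_clm_apply hPU hD
    rw [h1] at h2
    exact hD'def.trans h2
  -- inner ℝ product of U' and D'
  have hinner : (inner ℝ U' D' : ℝ) = inner ℝ U' (P' (D t)) := by
    have : (inner ℝ U' (P (U t) D') : ℝ) = 0 := by
      rw [← hsym U' D', htang, inner_zero_left]
    calc (inner ℝ U' D' : ℝ) = inner ℝ U' (P' (D t) + P (U t) D') := by rw [← hchain]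
      _ = inner ℝ U' (P' (D t)) + inner ℝ U' (P (U t) D') := inner_add_right _ _ _
      _ = inner ℝ U' (P' (D t)) := by rw [this, add_zero]
  -- bound the inner ℝ product
  have hbound : (inner ℝ U' D' : ℝ) ≥ -((c/2) * ‖D t‖ * ‖U'‖^2) := by
    rw [hinner]
    have h1 : |(inner ℝ U' (P' (D t)) : ℝ)| ≤ ‖U'‖ * ‖P' (D t)‖ := abs_real_inner_le_norm _ _
    have h2 : ‖P' (D t)‖ ≤ ‖P'‖ * ‖D t‖ := P'.le_opNorm _
    have h3 : ‖P'‖ * ‖D t‖ ≤ ((c/2) * ‖U'‖) * ‖D t‖ :=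
      mul_le_mul_of_nonneg_right hDP (norm_nonneg _)
    nlinarith [abs_nonneg (inner ℝ U' (P' (D t)) : ℝ), neg_abs_le (inner ℝ U' (P' (D t)) : ℝ),
      norm_nonneg U', norm_nonneg (P' (D t)), norm_nonneg (D t)]
  -- derivative of the norm is bounded by norm of the derivative
  have hnormderiv : |deriv (fun s => ‖D s‖) t| ≤ ‖D'‖ := by
    have hg : HasDerivAt (fun s => ‖D s‖) (deriv (fun s => ‖D s‖) t) t := hDdiff.hasDerivAt
    have hf : HasDerivAt D D' t := hD.hasDerivAt
    have hg' := hasDerivAt_iff_tendsto_slope.1 hg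
    have hf' := hasDerivAt_iff_tendsto_slope.1 hf
    have h1 : Filter.Tendsto (fun s => |slope (fun s => ‖D s‖) t s|) (nhdsWithin t {t}ᶜ)
        (nhds |deriv (fun s => ‖D s‖) t|) := hg'.abs
    have h2 : Filter.Tendsto (fun s => ‖slope D t s‖) (nhdsWithin t {t}ᶜ)
        (nhds ‖D'‖) := hf'.norm
    refine le_of_tendsto_of_tendsto' h1 h2 fun s => ?_
    simp only [slope, vsub_eq_sub]
    rw [smul_eq_mul, abs_mul, abs_inv, norm_smul, norm_inv, Real.norm_eq_abs]
    gcongr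
    exact abs_norm_sub_norm_le _ _
  -- put it together
  have hsq : ‖deriv Q t‖^2 = ‖U'‖^2 + 2 * inner ℝ U' D' + ‖D'‖^2 := by
    rw [hderivQ]
    exact norm_add_sq_real U' D'
  have habs : (deriv (fun s => ‖D s‖) t)^2 ≤ ‖D'‖^2 := by
    nlinarith [abs_nonneg (deriv (fun s => ‖D s‖) t), sq_abs (deriv (fun s => ‖D s‖) t)]
  have hDt : Q t - U t = D t := rfl
  rw [hsq]
  nlinarith [norm_nonneg (D t), norm_nonneg U', sq_nonneg ‖U'‖]
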